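/- For all α, β ∈ Λ: ε_w(α,β)/ε_w(β,α) = (−1)^{(α,β)} · ⟨β,α⟩_w. -/

import Mathlib

noncomputable section

/-- The subgroup `(1-w)Λ`. -/
def coinvSub {Λ : Type*} [AddCommGroup Λ] (w : AddAut Λ) : AddSubgroup Λ :=
  AddSubgroup.closure {y | ∃ x : Λ, y = x - w x}

/-- The pairing `ε_w(α,β) = ∏_{j=1}^{d-1} (1 - ζ^{-j})^{(w^jα,β)}`. -/
def epsw {k : Type*} [Field k] {Λ : Type*} [AddCommGroup Λ] (d : ℕ) (ζ : k)
    (B : Λ →+ Λ →+ ℤ) (w : AddAut Λ) (α β : Λ) : k :=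
  ∏ j ∈ Finset.Ico 1 d, (1 - ζ ^ (-(j : ℤ))) ^ (B ((j • w) α) β)

private lemma zpow_sum_aux {k : Type*} [Field k] (a : k) (ha : a ≠ 0)
    (s : Finset ℕ) (f : ℕ → ℤ) : a ^ (∑ i ∈ s, f i) = ∏ i ∈ s, a ^ f i := by
  classical
  induction s using Finset.induction with
  | empty => simp
  | insert _ _ h ih => rw [Finset.sum_insert h, Finset.prod_insert h, zpow_add₀ ha, ih]

private lemma neg_one_zpow_inv {k : Type*} [Field k] (n : ℤ) :
    ((-1:k) ^ n)⁻¹ = (-1:k) ^ n := by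
  rcases Int.even_or_odd n with h | h
  · rw [h.neg_one_zpow]; norm_num
  · rw [h.neg_one_zpow]; norm_num

/-- **Lemma 2.10.** `ε_w(α,β)/ε_w(β,α) = (−1)^{(α,β)} ⟨β,α⟩_w` for all `α, β ∈ Λ`,
where `⟨β,α⟩_w = ζ^{∑_{j=1}^{d-1} j·(w^jβ,α)}`. -/
theorem epsw_skew_symmetry
    (k : Type*) [Field k] [CharZero k]
    (d : ℕ) (hd : 0 < d) (ζ : k) (hζ : IsPrimitiveRoot ζ d)
    (Λ : Type*) [AddCommGroup Λ] [Module.Free ℤ Λ] [Module.Finite ℤ Λ]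
    (B : Λ →+ Λ →+ ℤ)
    (hBsymm : ∀ a b : Λ, B a b = B b a)
    (hBpos : ∀ a : Λ, a ≠ 0 → 0 < B a a)
    (hBgen : AddSubgroup.closure {a : Λ | B a a = 2} = ⊤)
    (w : AddAut Λ) (hwB : ∀ a b : Λ, B (w a) (w b) = B a b)
    (hword : addOrderOf w = d)
    (hell : Finite (Λ ⧸ coinvSub w)) :
    ∀ α β : Λ,
      epsw d ζ B w α β / epsw d ζ B w β α =
        (-1 : k) ^ (B α β) * ζ ^ (∑ j ∈ Finset.Ico 1 d, (j : ℤ) * B ((j • w) β) α) := by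
  classical
  haveI : Module.IsTorsionFree ℤ Λ := inferInstance
  have hwd : d • w = 0 := hword ▸ addOrderOf_nsmul_eq_zero w
  have hζd : ζ ^ d = 1 := hζ.pow_eq_one
  have hζ0 : ζ ≠ 0 := by
    intro h
    rw [h, zero_pow hd.ne'] at hζd
    exact zero_ne_one hζd
  have hζdz : ζ ^ (d : ℤ) = 1 := by rw [zpow_natCast, hζd]
  -- The averaging homomorphism ψ x = ∑_{j<d} w^j x
  set ψ : Λ →+ Λ := AddMonoidHom.mk' (fun x => ∑ j ∈ Finset.range d, (j • w) x)
    (fun a b => by simp [map_add, Finset.sum_add_distrib]) with hψdef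
  have hψapp : ∀ x : Λ, ψ x = ∑ j ∈ Finset.range d, (j • w) x := fun x => rfl
  have hfix : ∀ x : Λ, w (ψ x) = ψ x := by
    intro x
    have h1 : w (ψ x) = ∑ j ∈ Finset.range d, ((j+1) • w) x := by
      rw [hψapp, map_sum]
      exact Finset.sum_congr rfl fun j _ => by rw [succ_nsmul']; rfl
    have h2 := Finset.sum_range_succ' (fun j => (j • w) x) d
    have h3 := Finset.sum_range_succ (fun j => (j • w) x) d
    simp only [zero_smul, hwd, AddAut.zero_apply] at h2 h3
    rw [h1]
    have : (∑ j ∈ Finset.range d, ((j+1) • w) x) + x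
        = (∑ j ∈ Finset.range d, (j • w) x) + x := by
      rw [← h2, h3]
    have := add_right_cancel this
    rw [this, hψapp]
  have hkill : ∀ y ∈ coinvSub w, ψ y = 0 := by
    have : coinvSub w ≤ ψ.ker := by
      rw [coinvSub, AddSubgroup.closure_le]
      rintro y ⟨x, rfl⟩
      have hx : ψ (w x) = w (ψ x) := by
        rw [hψapp, hψapp, map_sum]
        exact Finset.sum_congr rfl fun j _ => by
          have : (j • w) (w x) = (j • w + w) x := rfl
          rw [this, ← (AddCommute.self_nsmul w j).eq]
          rfl
      simp only [SetLike.mem_coe, AddMonoidHom.mem_ker, map_sub, hx, hfix, sub_self]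
    exact fun y hy => this hy
  -- ψ vanishes identically (ellipticity)
  have hψ0 : ∀ x : Λ, ψ x = 0 := by
    intro x
    by_contra hne
    set φ := QuotientAddGroup.lift (coinvSub w) ψ (show coinvSub w ≤ ψ.ker from fun y hy => hkill y hy) with hφ
    have hmem : ∀ m : ℤ, m • ψ x ∈ Set.range φ := by
      intro m
      refine ⟨QuotientAddGroup.mk (m • x), ?_⟩
      rw [hφ, QuotientAddGroup.lift_mk', map_zsmul]
    have hinj : Function.Injective (fun m : ℤ => m • ψ x) := smul_left_injective ℤ hne
    exact (Set.infinite_of_injective_forall_mem hinj hmem) (Set.finite_range φ)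
  -- key sum vanishing
  have hBsum : ∀ x y : Λ, ∑ j ∈ Finset.range d, B ((j • w) x) y = 0 := by
    intro x y
    calc ∑ j ∈ Finset.range d, B ((j • w) x) y
        = B.flip y (∑ j ∈ Finset.range d, (j • w) x) := by
          rw [map_sum]; rfl
      _ = B.flip y (ψ x) := by rw [hψapp]
      _ = 0 := by rw [hψ0 x]; simp
  -- invariance under powers
  have hwBn : ∀ (n : ℕ) (a b : Λ), B ((n • w) a) ((n • w) b) = B a b := by
    intro n
    induction n with
    | zero => simp
    | succ n ih =>
      intro a b
      have h1 : ((n+1) • w) a = (n • w) (w a) := by rw [succ_nsmul]; rfl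
      have h2 : ((n+1) • w) b = (n • w) (w b) := by rw [succ_nsmul]; rfl
      rw [h1, h2, ih, hwB]
  intro α β
  set m : ℕ → ℤ := fun j => B ((j • w) α) β with hm
  -- reindexing identity
  have hre : ∀ j, 1 ≤ j → j < d → B ((j • w) β) α = m (d - j) := by
    intro j h1 h2
    have hdj : (j • w) (((d - j) • w) α) = α := by
      have : (j • w) (((d - j) • w) α) = (j • w + (d - j) • w) α := rfl
      rw [this, ← add_nsmul, Nat.add_sub_cancel' h2.le, hwd, AddAut.zero_apply]
    calc B ((j • w) β) α = B ((j • w) β) ((j • w) (((d-j) • w) α)) := by rw [hdj]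
      _ = B β (((d-j) • w) α) := hwBn j β _
      _ = m (d - j) := hBsymm _ _
  -- nonvanishing
  have hne1 : ∀ j, 1 ≤ j → j < d → (1:k) - ζ ^ (j:ℤ) ≠ 0 := by
    intro j h1 h2 h
    have : ζ ^ j = 1 := by
      have := sub_eq_zero.mp h
      rw [← zpow_natCast, ← this]
    exact hζ.pow_ne_one_of_pos_of_lt (by omega) h2 this
  have hne2 : ∀ j, 1 ≤ j → j < d → (1:k) - ζ ^ (-(j:ℤ)) ≠ 0 := by
    intro j h1 h2 h
    have h' : ζ ^ (-(j:ℤ)) = 1 := (sub_eq_zero.mp h).symm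
    have : ζ ^ ((j:ℤ)) = 1 := by
      rw [zpow_neg] at h'
      rw [← inv_inv (ζ ^ ((j:ℤ))), h', inv_one]
    rw [zpow_natCast] at this
    exact hζ.pow_ne_one_of_pos_of_lt (by omega) h2 this
  -- Step A : reindex epsw β α
  have hA : epsw d ζ B w β α = ∏ j ∈ Finset.Ico 1 d, (1 - ζ ^ (j:ℤ)) ^ (m j) := by
    rw [epsw]
    refine Finset.prod_nbij' (fun j => d - j) (fun j => d - j) ?_ ?_ ?_ ?_ ?_
    · intro a ha
      simp only [Finset.mem_Ico] at ha ⊢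
      omega
    · intro a ha
      simp only [Finset.mem_Ico] at ha ⊢
      omega
    · intro a ha
      simp only [Finset.mem_Ico] at ha
      show d - (d - a) = a
      omega
    · intro a ha
      simp only [Finset.mem_Ico] at ha
      show d - (d - a) = a
      omega
    · intro j hj
      rw [Finset.mem_Ico] at hj
      have hcast : ((d - j : ℕ) : ℤ) = (d : ℤ) - (j : ℤ) := by
        rw [Nat.cast_sub hj.2.le]
      have hbase : ζ ^ (-(j:ℤ)) = ζ ^ ((d - j : ℕ) : ℤ) := by
        rw [hcast, sub_eq_add_neg, zpow_add₀ hζ0, hζdz, one_mul]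
      rw [hre j hj.1 hj.2, hbase]
  rw [hA]
  -- Step C : main computation of the quotient
  have hC : epsw d ζ B w α β / (∏ j ∈ Finset.Ico 1 d, (1 - ζ ^ (j:ℤ)) ^ (m j))
      = ((-1:k) ^ (∑ j ∈ Finset.Ico 1 d, m j))
        * ζ ^ (∑ j ∈ Finset.Ico 1 d, (-(j:ℤ)) * m j) := by
    rw [epsw, ← Finset.prod_div_distrib]
    rw [zpow_sum_aux (-1:k) (by norm_num), zpow_sum_aux ζ hζ0, ← Finset.prod_mul_distrib]
    refine Finset.prod_congr rfl ?_
    intro j hj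
    rw [Finset.mem_Ico] at hj
    have hzz : ζ ^ (-(j:ℤ)) * ζ ^ ((j:ℤ)) = 1 := by
      rw [← zpow_add₀ hζ0]; simp
    have hdiv : (1 - ζ ^ (-(j:ℤ))) / (1 - ζ ^ ((j:ℤ))) = -(ζ ^ (-(j:ℤ))) := by
      rw [div_eq_iff (hne1 j hj.1 hj.2)]
      linear_combination -hzz
    rw [← div_zpow, hdiv]
    have : -(ζ ^ (-(j:ℤ))) = (-1) * ζ ^ (-(j:ℤ)) := by ring
    rw [this, mul_zpow, ← zpow_mul]
  rw [hC]
  -- Step D : the sums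
  have hs0 : ∑ j ∈ Finset.Ico 1 d, m j = - B α β := by
    have h0 := hBsum α β
    rw [Finset.range_eq_Ico, Finset.sum_eq_sum_Ico_succ_bot hd] at h0
    simp only [zero_smul, AddAut.zero_apply, zero_add] at h0
    simp only [hm]
    linarith [h0]
  have hsgn : ((-1:k) ^ (∑ j ∈ Finset.Ico 1 d, m j)) = (-1:k) ^ (B α β) := by
    rw [hs0, zpow_neg, neg_one_zpow_inv]
  rw [hsgn]
  -- exponent comparison for ζ
  have hE1 : (∑ j ∈ Finset.Ico 1 d, (j : ℤ) * B ((j • w) β) α)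
      = ∑ j ∈ Finset.Ico 1 d, ((d:ℤ) - (j:ℤ)) * m j := by
    refine Finset.sum_nbij' (fun j => d - j) (fun j => d - j) ?_ ?_ ?_ ?_ ?_
    · intro a ha; simp only [Finset.mem_Ico] at ha ⊢; omega
    · intro a ha; simp only [Finset.mem_Ico] at ha ⊢; omega
    · intro a ha; simp only [Finset.mem_Ico] at ha; show d - (d - a) = a; omega
    · intro a ha; simp only [Finset.mem_Ico] at ha; show d - (d - a) = a; omega
    · intro j hj
      rw [Finset.mem_Ico] at hj
      rw [hre j hj.1 hj.2]
      have hcast : ((d - j : ℕ) : ℤ) = (d : ℤ) - (j : ℤ) := by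
        rw [Nat.cast_sub hj.2.le]
      rw [hcast]
      ring
  have hEdiff : (∑ j ∈ Finset.Ico 1 d, (j : ℤ) * B ((j • w) β) α)
      = (∑ j ∈ Finset.Ico 1 d, (-(j:ℤ)) * m j) + (d : ℤ) * (- B α β) := by
    rw [hE1, ← hs0, Finset.mul_sum, ← Finset.sum_add_distrib]
    exact Finset.sum_congr rfl fun j _ => by ring
  rw [hEdiff, zpow_add₀ hζ0, zpow_mul, hζdz, one_zpow, mul_one]

end
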